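/- arXiv:1105.3355 — 2 statements merged into one kernel-verified Lean document; each statement's English description precedes it below -/
import Mathlib

section
/- Let f : ω → ω\{0} and let U_f = ∪_n N_{0^{(n)}1^{(f(n))}} ⊆ 2^ω. If lim_{n→∞} f(n) = ∞, then the point 0^∞ (the all-zeros sequence) has density 0 in U_f; consequently the closed set F = 2^ω \ U_f satisfies Φ(F) = F, i.e., F is 𝒯-regular. -/
open MeasureTheory Filter Topology Set
open scoped ENNReal symmDiff

noncomputable section

/-- The Cantor space `2^ω`. -/
abbrev Cantor : Type := ℕ → Bool

/-- The first `n` digits of `x` as a finite binary string. -/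
def seg (x : Cantor) (n : ℕ) : List Bool := List.ofFn (fun i : Fin n => x i)

/-- The basic clopen set `N_s` of all extensions of the finite string `s`. -/
def cyl (s : List Bool) : Set Cantor := {x | seg x s.length = s}

/-- Concatenation `s⌢x` of a finite string with an infinite sequence. -/
def cat (s : List Bool) (x : Cantor) : Cantor :=
  fun n => if h : n < s.length then s.get ⟨n, h⟩ else x (n - s.length)

/-- The localization `A_s = {x : s⌢x ∈ A}` of `A` at `s`. -/
def loc (s : List Bool) (A : Set Cantor) : Set Cantor := {x | cat s x ∈ A}

/-- `Φ(A)`: the set of points of density `1` in `A`. -/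
def dens1 (μ : Measure Cantor) (A : Set Cantor) : Set Cantor :=
  {x | Tendsto (fun n => μ (A ∩ cyl (seg x n)) / μ (cyl (seg x n))) atTop (𝓝 1)}

/-- `μ` is the coin-tossing (Lebesgue) measure on Cantor space:
it gives each basic clopen set `N_s` measure `2^{-|s|}`. -/
def IsCoin (μ : Measure Cantor) : Prop :=
  ∀ s : List Bool, μ (cyl s) = (2 : ℝ≥0∞)⁻¹ ^ s.length

/-- The rake-shaped open set U_f determined by f. -/
def Uf (f : ℕ → ℕ) : Set Cantor :=
  ⋃ n, cyl (List.replicate n false ++ List.replicate (f n) true)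

lemma seg_length (x : Cantor) (n : ℕ) : (seg x n).length = n := by simp [seg]

lemma mem_cyl {x : Cantor} {s : List Bool} :
    x ∈ cyl s ↔ ∀ i (h : i < s.length), x i = s[i] := by
  simp only [cyl, Set.mem_setOf_eq, seg]
  constructor
  · intro h i hi
    rw [List.getElem_of_eq h.symm hi]
    simp
  · intro h
    apply List.ext_getElem
    · simp
    · intro i h1 h2
      simpa using h i h2

lemma mem_cyl_seg {x y : Cantor} {m : ℕ} :
    y ∈ cyl (seg x m) ↔ ∀ i < m, y i = x i := by
  rw [mem_cyl]
  simp [seg]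

lemma measurableSet_cyl (s : List Bool) : MeasurableSet (cyl s) := by
  have : cyl s = ⋂ i : Fin s.length, (fun x : Cantor => x i) ⁻¹' {s[i]} := by
    ext x; simp [mem_cyl, Fin.forall_iff]
  rw [this]
  exact MeasurableSet.iInter fun i => (measurable_pi_apply _) (measurableSet_singleton _)

lemma mem_cyl_rake {y : Cantor} {n q : ℕ} :
    y ∈ cyl (List.replicate n false ++ List.replicate q true) ↔
      (∀ i < n, y i = false) ∧ ∀ i, n ≤ i → i < n + q → y i = true := by
  rw [mem_cyl]
  simp only [List.length_append, List.length_replicate]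
  constructor
  · intro h
    refine ⟨fun i hi => ?_, fun i hni hi => ?_⟩
    · have := h i (by omega)
      rwa [List.getElem_append_left (by simpa using hi), List.getElem_replicate] at this
    · have := h i hi
      rwa [List.getElem_append_right (by simpa using hni), List.getElem_replicate] at this
  · rintro ⟨h1, h2⟩ i hi
    by_cases hin : i < n
    · rw [List.getElem_append_left (by simpa using hin), List.getElem_replicate]
      exact h1 i hin
    · rw [List.getElem_append_right (by simpa using hin), List.getElem_replicate]
      exact h2 i (by omega) hi

lemma part1 (μ : Measure Cantor) (hμ : IsCoin μ) (f : ℕ → ℕ) (hf0 : ∀ n, 0 < f n)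
    (hf : Tendsto f atTop atTop) :
    Tendsto (fun n =>
        μ (Uf f ∩ cyl (seg (fun _ => false) n)) / μ (cyl (seg (fun _ => false) n)))
      atTop (𝓝 0) := by
  rw [ENNReal.tendsto_atTop_zero]
  intro ε hε
  obtain ⟨K, hK⟩ := ENNReal.exists_inv_two_pow_lt hε.ne'
  obtain ⟨N, hN⟩ := eventually_atTop.mp (hf.eventually_ge_atTop (K + 1))
  refine ⟨N, fun n hn => ?_⟩
  have hc : μ (cyl (seg (fun _ => false) n)) = 2⁻¹ ^ n := by rw [hμ, seg_length]
  have hsub : Uf f ∩ cyl (seg (fun _ => false) n) ⊆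
      ⋃ m : ℕ, cyl (List.replicate (n + m) false ++ List.replicate (f (n + m)) true) := by
    rintro y ⟨hyU, hyC⟩
    rw [Uf, Set.mem_iUnion] at hyU
    obtain ⟨p, hp⟩ := hyU
    rw [mem_cyl_seg] at hyC
    have hpn : n ≤ p := by
      by_contra hlt
      push_neg at hlt
      have h1 := (mem_cyl_rake.mp hp).2 p le_rfl (by have := hf0 p; omega)
      have h2 : y p = false := hyC p hlt
      rw [h2] at h1
      exact Bool.noConfusion h1
    exact Set.mem_iUnion.mpr ⟨p - n, by rwa [Nat.add_sub_cancel' hpn]⟩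
  have hpow : ∀ m : ℕ, ((2 : ℝ≥0∞)⁻¹) ^ ((n + m) + f (n + m)) ≤ 2⁻¹ ^ (n + K + 1) * 2⁻¹ ^ m := by
    intro m
    rw [← pow_add]
    refine pow_le_pow_of_le_one zero_le (by norm_num) ?_
    have := hN (n + m) (by omega)
    omega
  have hb : μ (Uf f ∩ cyl (seg (fun _ => false) n)) ≤ 2⁻¹ ^ (n + K + 1) * 2 := by
    calc μ (Uf f ∩ cyl (seg (fun _ => false) n))
        ≤ μ (⋃ m : ℕ, cyl (List.replicate (n + m) false ++ List.replicate (f (n + m)) true)) :=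
          measure_mono hsub
      _ ≤ ∑' m : ℕ, μ (cyl (List.replicate (n + m) false ++ List.replicate (f (n + m)) true)) :=
          measure_iUnion_le _
      _ = ∑' m : ℕ, ((2 : ℝ≥0∞)⁻¹) ^ ((n + m) + f (n + m)) := by
          simp [hμ _]
      _ ≤ ∑' m : ℕ, 2⁻¹ ^ (n + K + 1) * 2⁻¹ ^ m :=
          ENNReal.tsum_le_tsum hpow
      _ = 2⁻¹ ^ (n + K + 1) * ∑' m : ℕ, (2 : ℝ≥0∞)⁻¹ ^ m := ENNReal.tsum_mul_left
      _ = 2⁻¹ ^ (n + K + 1) * 2 := by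
          rw [ENNReal.tsum_geometric, ENNReal.one_sub_inv_two, inv_inv]
  rw [hc]
  have hne0 : ((2 : ℝ≥0∞)⁻¹) ^ n ≠ 0 := pow_ne_zero _ (by norm_num)
  have hnetop : ((2 : ℝ≥0∞)⁻¹) ^ n ≠ ∞ := by
    exact ENNReal.pow_ne_top (by simp)
  calc μ (Uf f ∩ cyl (seg (fun _ => false) n)) / 2⁻¹ ^ n
      ≤ (2⁻¹ ^ (n + K + 1) * 2) / 2⁻¹ ^ n := ENNReal.div_le_div_right hb _
    _ = 2⁻¹ ^ K := by
        have : ((2 : ℝ≥0∞)⁻¹) ^ (n + K + 1) * 2 = 2⁻¹ ^ K * 2⁻¹ ^ n := by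
          have h2 : (2 : ℝ≥0∞)⁻¹ * 2 = 1 := ENNReal.inv_mul_cancel (by norm_num) (by norm_num)
          rw [pow_add, pow_add, pow_one, mul_assoc, mul_assoc, h2, mul_one, mul_comm]
        rw [this, mul_div_assoc, ENNReal.div_self hne0 hnetop, mul_one]
    _ ≤ ε := hK.le

lemma measurableSet_Uf (f : ℕ → ℕ) : MeasurableSet (Uf f) :=
  MeasurableSet.iUnion fun _ => measurableSet_cyl _

/-- If f(n) → ∞ then 0^∞ has density 0 in U_f, and the closed complement of U_f is
𝒯-regular. -/
theorem stmt15 (μ : Measure Cantor) (hμ : IsCoin μ) (f : ℕ → ℕ) (hf0 : ∀ n, 0 < f n)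
    (hf : Tendsto f atTop atTop) :
    Tendsto (fun n =>
        μ (Uf f ∩ cyl (seg (fun _ => false) n)) / μ (cyl (seg (fun _ => false) n)))
      atTop (𝓝 0) ∧
    dens1 μ (Uf f)ᶜ = (Uf f)ᶜ := by
  have h1 := part1 μ hμ f hf0 hf
  refine ⟨h1, ?_⟩
  ext x
  simp only [dens1, Set.mem_setOf_eq, Set.mem_compl_iff]
  constructor
  · intro hx hxU
    rw [Uf, Set.mem_iUnion] at hxU
    obtain ⟨n, hn⟩ := hxU
    have hlen : (List.replicate n false ++ List.replicate (f n) true).length = n + f n := by simp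
    have hev : ∀ᶠ m in atTop, μ ((Uf f)ᶜ ∩ cyl (seg x m)) / μ (cyl (seg x m)) = 0 := by
      filter_upwards [eventually_ge_atTop (n + f n)] with m hm
      have hsub : cyl (seg x m) ⊆ Uf f := by
        intro y hy
        rw [mem_cyl_seg] at hy
        refine Set.mem_iUnion.mpr ⟨n, ?_⟩
        rw [mem_cyl] at hn ⊢
        intro i hi
        rw [hy i (by rw [hlen] at hi; omega)]
        exact hn i hi
      have hempty : (Uf f)ᶜ ∩ cyl (seg x m) = ∅ := by
        rw [Set.eq_empty_iff_forall_notMem]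
        rintro y ⟨hy1, hy2⟩
        exact hy1 (hsub hy2)
      rw [hempty]
      simp
    have h0 : Tendsto (fun m => μ ((Uf f)ᶜ ∩ cyl (seg x m)) / μ (cyl (seg x m))) atTop (𝓝 0) :=
      Tendsto.congr' (by filter_upwards [hev] with m hm; exact hm.symm) tendsto_const_nhds
    exact one_ne_zero (tendsto_nhds_unique hx h0)
  · intro hx
    by_cases hzero : ∀ i, x i = false
    · have hxeq : x = fun _ => false := funext hzero
      subst hxeq
      have hmeas := measurableSet_Uf f
      have key : ∀ m, μ ((Uf f)ᶜ ∩ cyl (seg (fun _ => false) m)) / μ (cyl (seg (fun _ => false) m))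
          = 1 - μ (Uf f ∩ cyl (seg (fun _ => false) m)) / μ (cyl (seg (fun _ => false) m)) := by
        intro m
        set C := cyl (seg (fun _ : ℕ => false) m) with hC
        have hcm : μ C = 2⁻¹ ^ m := by rw [hC, hμ, seg_length]
        have hne0 : μ C ≠ 0 := by rw [hcm]; exact pow_ne_zero _ (by norm_num)
        have hnetop : μ C ≠ ∞ := by rw [hcm]; exact ENNReal.pow_ne_top (by simp)
        have hsplit : μ (Uf f ∩ C) + μ ((Uf f)ᶜ ∩ C) = μ C := by
          have h := measure_inter_add_diff (μ := μ) C hmeas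
          rw [Set.diff_eq, Set.inter_comm C, Set.inter_comm C] at h
          exact h
        have hdiv : μ ((Uf f)ᶜ ∩ C) / μ C + μ (Uf f ∩ C) / μ C = 1 := by
          rw [ENNReal.div_add_div_same, add_comm, hsplit, ENNReal.div_self hne0 hnetop]
        have hfin : μ (Uf f ∩ C) / μ C ≠ ∞ :=
          (ENNReal.div_lt_top (ne_top_of_le_ne_top hnetop (measure_mono Set.inter_subset_right)) hne0).ne
        exact ENNReal.eq_sub_of_add_eq hfin hdiv
      have htend : Tendsto (fun m =>
          (1 : ℝ≥0∞) - μ (Uf f ∩ cyl (seg (fun _ => false) m)) / μ (cyl (seg (fun _ => false) m)))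
          atTop (𝓝 1) := by
        have hc1 : Tendsto (fun _ : ℕ => (1 : ℝ≥0∞)) atTop (𝓝 1) := tendsto_const_nhds
        have := ENNReal.Tendsto.sub hc1 h1 (Or.inl ENNReal.one_ne_top)
        simpa using this
      exact htend.congr fun m => (key m).symm
    · push_neg at hzero
      obtain ⟨j, hj⟩ := hzero
      have hj' : x j = true := by revert hj; cases x j <;> simp
      set M := (Finset.range (j + 1)).sup (fun p => p + f p) + (j + 1) with hM
      have hev : ∀ᶠ m in atTop, μ ((Uf f)ᶜ ∩ cyl (seg x m)) / μ (cyl (seg x m)) = 1 := by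
        filter_upwards [eventually_ge_atTop M] with m hm
        have hjm : j < m := by
          have : j + 1 ≤ M := Nat.le_add_left _ _
          omega
        have hsub : cyl (seg x m) ⊆ (Uf f)ᶜ := by
          intro y hy
          rw [mem_cyl_seg] at hy
          intro hyU
          rw [Uf, Set.mem_iUnion] at hyU
          obtain ⟨p, hp⟩ := hyU
          rw [mem_cyl_rake] at hp
          by_cases hpj : j < p
          · have h2 := hp.1 j hpj
            rw [hy j hjm, hj'] at h2
            exact Bool.noConfusion h2
          · have hpf : p + f p ≤ m := by
              have hle : p + f p ≤ (Finset.range (j + 1)).sup (fun p => p + f p) :=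
                Finset.le_sup (f := fun q => q + f q) (b := p)
                  (Finset.mem_range.mpr (Nat.lt_succ_of_le (not_lt.mp hpj)))
              omega
            apply hx
            refine Set.mem_iUnion.mpr ⟨p, mem_cyl_rake.mpr ⟨fun i hi => ?_, fun i h1' h2' => ?_⟩⟩
            · have him : i < m := by have := hf0 p; omega
              rw [← hy i him]; exact hp.1 i hi
            · have him : i < m := by omega
              rw [← hy i him]; exact hp.2 i h1' h2'
        have hCsub : (Uf f)ᶜ ∩ cyl (seg x m) = cyl (seg x m) :=
          Set.inter_eq_self_of_subset_right hsub
        rw [hCsub, hμ, seg_length]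
        exact ENNReal.div_self (pow_ne_zero _ (by norm_num)) (ENNReal.pow_ne_top (by simp))
      exact Tendsto.congr' (by filter_upwards [hev] with m hm; exact hm.symm) tendsto_const_nhds
end
end

section
/- Let f : ω → ω\{0} satisfy f(n) = 1 for all sufficiently large n, and let U_f = ∪_n N_{0^{(n)}1^{(f(n))}}. Then the point 0^∞ has density 1 in U_f, hence Φ(U_f) = U_f ∪ {0^∞} ⊋ U_f; so U_f is an open set that is not 𝒯-regular. -/
open MeasureTheory Filter Topology Set
open scoped ENNReal symmDiff

noncomputable section

lemma mem_cyl_iff {s : List Bool} {x : Cantor} :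
    x ∈ cyl s ↔ ∀ i (h : i < s.length), x i = s[i] := by
  constructor
  · intro hx i h
    have hx' : seg x s.length = s := hx
    have := List.getElem_of_eq hx'.symm h
    simp only [seg, List.getElem_ofFn] at this
    exact this.symm
  · intro h
    apply List.ext_getElem (by simp [seg])
    intro i h1 h2
    simp only [seg, List.getElem_ofFn]
    exact h i h2

lemma rep_getElem (n m : ℕ) (i : ℕ)
    (h : i < (List.replicate n false ++ List.replicate m true).length) :
    (List.replicate n false ++ List.replicate m true)[i] = decide (n ≤ i) := by
  rcases lt_or_ge i n with h1 | h1
  · rw [List.getElem_append_left (by simpa using h1)]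
    simp [Nat.not_le.mpr h1]
  · rw [List.getElem_append_right (by simpa using h1)]
    simp [h1]

lemma mem_cyl_rep {n m : ℕ} {x : Cantor} :
    x ∈ cyl (List.replicate n false ++ List.replicate m true) ↔
      ∀ i < n + m, x i = decide (n ≤ i) := by
  rw [mem_cyl_iff]
  constructor
  · intro h i hi
    rw [h i (by simpa using hi), rep_getElem]
  · intro h i hi
    rw [rep_getElem]
    exact h i (by simpa using hi)

lemma mem_cyl_seg_self (x : Cantor) (k : ℕ) : x ∈ cyl (seg x k) := by
  rw [mem_cyl_iff]
  intro i h
  simp [seg]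

lemma length_seg (x : Cantor) (k : ℕ) : (seg x k).length = k := by simp [seg]

lemma cyl_seg_subset {s : List Bool} {x : Cantor} (hx : x ∈ cyl s) {k : ℕ}
    (hk : s.length ≤ k) : cyl (seg x k) ⊆ cyl s := by
  intro y hy
  rw [mem_cyl_iff] at hx hy ⊢
  intro i h
  rw [← hx i h]
  have := hy i (by rw [length_seg]; exact lt_of_lt_of_le h hk)
  simpa [seg] using this

lemma cyl_ne_zero (μ : Measure Cantor) (hμ : IsCoin μ) (s : List Bool) :
    μ (cyl s) ≠ 0 := by
  rw [hμ]
  exact pow_ne_zero _ (by simp)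

lemma cyl_ne_top (μ : Measure Cantor) (hμ : IsCoin μ) (s : List Bool) :
    μ (cyl s) ≠ ⊤ := by
  rw [hμ]
  exact ENNReal.pow_ne_top (by simp)

/-- the all-zeros point -/
def zpt : Cantor := fun _ => false

lemma zpt_not_mem_Uf (f : ℕ → ℕ) (hf0 : ∀ n, 0 < f n) : zpt ∉ Uf f := by
  intro h
  obtain ⟨n, hn⟩ := Set.mem_iUnion.mp h
  have := mem_cyl_rep.mp hn n (by have := hf0 n; omega)
  simp [zpt] at this

lemma meas_zpt (μ : Measure Cantor) (hμ : IsCoin μ) : μ {zpt} = 0 := by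
  have h1 : ∀ k : ℕ, μ {zpt} ≤ (2 : ℝ≥0∞)⁻¹ ^ k := by
    intro k
    have : ({zpt} : Set Cantor) ⊆ cyl (seg zpt k) := by
      intro y hy; rw [hy]; exact mem_cyl_seg_self _ _
    calc μ {zpt} ≤ μ (cyl (seg zpt k)) := measure_mono this
      _ = (2 : ℝ≥0∞)⁻¹ ^ k := by rw [hμ, length_seg]
  have h2 : Tendsto (fun k : ℕ => (2 : ℝ≥0∞)⁻¹ ^ k) atTop (𝓝 0) :=
    ENNReal.tendsto_pow_atTop_nhds_zero_of_lt_one (by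
      rw [ENNReal.inv_lt_one]; norm_num)
  exact le_antisymm (ge_of_tendsto h2 (Eventually.of_forall h1)) zero_le

/-- If f(n) = 1 for all large n, then 0^∞ has density 1 in U_f, so
Φ(U_f) = U_f ∪ {0^∞} properly contains U_f: U_f is open but not 𝒯-regular. -/
theorem stmt16 (μ : Measure Cantor) (hμ : IsCoin μ) (f : ℕ → ℕ) (hf0 : ∀ n, 0 < f n)
    (hf : ∀ᶠ n in atTop, f n = 1) :
    (fun _ => false) ∈ dens1 μ (Uf f) ∧
    dens1 μ (Uf f) = Uf f ∪ {fun _ => false} ∧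
    Uf f ≠ dens1 μ (Uf f) := by
  obtain ⟨N, hN⟩ := eventually_atTop.mp hf
  -- step 1 : zpt ∈ dens1
  have hz : zpt ∈ dens1 μ (Uf f) := by
    have hev : ∀ k ≥ N, μ (Uf f ∩ cyl (seg zpt k)) / μ (cyl (seg zpt k)) = 1 := by
      intro k hk
      have hsub : cyl (seg zpt k) \ {zpt} ⊆ Uf f := by
        intro x ⟨hx1, hx2⟩
        have hxz : ∃ m, x m = true := by
          by_contra h
          push_neg at h
          exact hx2 (funext fun m => by simpa [zpt] using h m)
        set n := Nat.find hxz with hn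
        have hxn : x n = true := Nat.find_spec hxz
        have hlt : ∀ i < n, x i = false := fun i hi => by
          simpa using Nat.find_min hxz hi
        have hkn : k ≤ n := by
          by_contra h
          push_neg at h
          have := mem_cyl_iff.mp hx1 n (by rw [length_seg]; exact h)
          simp only [seg, List.getElem_ofFn] at this
          simp [zpt, this] at hxn
        have hfn : f n = 1 := hN n (le_trans hk hkn)
        refine Set.mem_iUnion.mpr ⟨n, mem_cyl_rep.mpr ?_⟩
        intro i hi
        rcases lt_or_ge i n with h1 | h1
        · simp [hlt i h1, Nat.not_le.mpr h1]
        · have : i = n := by omega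
          simp [this, hxn, h1]
      have hmem : zpt ∈ cyl (seg zpt k) := mem_cyl_seg_self _ _
      have hle : μ (cyl (seg zpt k)) ≤ μ (Uf f ∩ cyl (seg zpt k)) := by
        have : cyl (seg zpt k) ⊆ (Uf f ∩ cyl (seg zpt k)) ∪ {zpt} := by
          intro y hy
          by_cases hyz : y = zpt
          · exact Or.inr hyz
          · exact Or.inl ⟨hsub ⟨hy, hyz⟩, hy⟩
        calc μ (cyl (seg zpt k)) ≤ μ ((Uf f ∩ cyl (seg zpt k)) ∪ {zpt}) := measure_mono this
          _ ≤ μ (Uf f ∩ cyl (seg zpt k)) + μ {zpt} := measure_union_le _ _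
          _ = μ (Uf f ∩ cyl (seg zpt k)) := by rw [meas_zpt μ hμ, add_zero]
      have heq : μ (Uf f ∩ cyl (seg zpt k)) = μ (cyl (seg zpt k)) :=
        le_antisymm (measure_mono Set.inter_subset_right) hle
      rw [heq]
      exact ENNReal.div_self (cyl_ne_zero μ hμ _) (cyl_ne_top μ hμ _)
    have : (fun k => μ (Uf f ∩ cyl (seg zpt k)) / μ (cyl (seg zpt k)))
        =ᶠ[atTop] (fun _ => (1:ℝ≥0∞)) := eventually_atTop.mpr ⟨N, hev⟩
    exact Tendsto.congr' this.symm tendsto_const_nhds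
  -- membership of points of Uf in dens1
  have hUf : ∀ x ∈ Uf f, x ∈ dens1 μ (Uf f) := by
    intro x hx
    obtain ⟨n, hn⟩ := Set.mem_iUnion.mp hx
    set s := List.replicate n false ++ List.replicate (f n) true with hs
    have hev : ∀ k ≥ s.length, μ (Uf f ∩ cyl (seg x k)) / μ (cyl (seg x k)) = 1 := by
      intro k hk
      have h1 : cyl (seg x k) ⊆ Uf f :=
        (cyl_seg_subset hn hk).trans
          (Set.subset_iUnion (fun m => cyl (List.replicate m false ++ List.replicate (f m) true)) n)
      rw [Set.inter_eq_self_of_subset_right h1]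
      exact ENNReal.div_self (cyl_ne_zero μ hμ _) (cyl_ne_top μ hμ _)
    have : (fun k => μ (Uf f ∩ cyl (seg x k)) / μ (cyl (seg x k)))
        =ᶠ[atTop] (fun _ => (1:ℝ≥0∞)) := eventually_atTop.mpr ⟨s.length, hev⟩
    exact Tendsto.congr' this.symm tendsto_const_nhds
  -- converse
  have hconv : ∀ x ∈ dens1 μ (Uf f), x ∈ Uf f ∪ {zpt} := by
    intro x hx
    by_contra h
    simp only [Set.mem_union, Set.mem_singleton_iff, not_or] at h
    obtain ⟨hxU, hxz⟩ := h
    have hxz' : ∃ m, x m = true := by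
      by_contra h'
      push_neg at h'
      exact hxz (funext fun m => by simpa [zpt] using h' m)
    set n := Nat.find hxz' with hn
    have hxn : x n = true := Nat.find_spec hxz'
    have hlt : ∀ i < n, x i = false := fun i hi => by
      simpa using Nat.find_min hxz' hi
    -- x ∉ cyl (0^n 1^{f n}) gives a false digit in [n, n + f n)
    have hxnc : x ∉ cyl (List.replicate n false ++ List.replicate (f n) true) :=
      fun hc => hxU (Set.mem_iUnion.mpr ⟨n, hc⟩)
    have hj : ∃ j, n ≤ j ∧ j < n + f n ∧ x j = false := by
      by_contra h'
      push_neg at h'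
      apply hxnc
      rw [mem_cyl_rep]
      intro i hi
      rcases lt_or_ge i n with h1 | h1
      · simp [hlt i h1, Nat.not_le.mpr h1]
      · simp [h1]
        exact Bool.ne_false_iff.mp (h' i h1 hi)
    obtain ⟨j, hjn, hjm, hjf⟩ := hj
    -- for k > j, cyl (seg x k) ∩ Uf f = ∅
    have hev : ∀ k ≥ j + 1, μ (Uf f ∩ cyl (seg x k)) / μ (cyl (seg x k)) = 0 := by
      intro k hk
      have hempty : Uf f ∩ cyl (seg x k) = ∅ := by
        rw [Set.eq_empty_iff_forall_notMem]
        rintro y ⟨hyU, hyc⟩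
        have hyx : ∀ i < k, y i = x i := by
          intro i hi
          have := mem_cyl_iff.mp hyc i (by rw [length_seg]; exact hi)
          simpa [seg] using this
        obtain ⟨m, hm⟩ := Set.mem_iUnion.mp hyU
        rw [mem_cyl_rep] at hm
        rcases lt_trichotomy m n with h1 | h1 | h1
        · -- y m should be true but x m = false
          have h2 : y m = x m := hyx m (by omega)
          have := hm m (by have := hf0 m; omega)
          rw [h2, hlt m h1] at this
          simp at this
        · subst h1
          have := hm j (by omega)
          rw [hyx j (by omega), hjf] at this
          simp [hjn] at this
        · have := hm n (by have := hf0 m; omega)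
          rw [hyx n (by omega), hxn] at this
          simp [Nat.not_le.mpr h1] at this
      rw [hempty]
      simp [ENNReal.div_eq_zero_iff]
    have h0 : Tendsto (fun k => μ (Uf f ∩ cyl (seg x k)) / μ (cyl (seg x k))) atTop (𝓝 0) := by
      have : (fun k => μ (Uf f ∩ cyl (seg x k)) / μ (cyl (seg x k)))
          =ᶠ[atTop] (fun _ => (0:ℝ≥0∞)) := eventually_atTop.mpr ⟨j + 1, hev⟩
      exact Tendsto.congr' this.symm tendsto_const_nhds
    have := tendsto_nhds_unique hx h0
    simp at this
  refine ⟨hz, ?_, ?_⟩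
  · apply Set.Subset.antisymm
    · intro x hx
      exact hconv x hx
    · rintro x (hx | hx)
      · exact hUf x hx
      · rw [Set.mem_singleton_iff] at hx
        rw [hx]; exact hz
  · intro h
    have : zpt ∈ Uf f := h ▸ hz
    exact zpt_not_mem_Uf f hf0 this
end
end
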